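/- arXiv:0802.2079 — 2 statements merged into one kernel-verified Lean document; each statement's English description precedes it below -/
import Mathlib

section
/- Let k be a field, and fix power series P_i(t) = Σ_{j≥1} c_{i,j} t^j ∈ t·k[[t]] for 2 ≤ i ≤ n. Define v: k[[x_1,…,x_n]] → Z_{≥0} ∪ {∞} by v(ψ) = ord_t ψ(t, P_2(t),…,P_n(t)). For a positive integer q, set a_q = {f : v(f) ≥ q} and z_i = x_i − Σ_{j=1}^{q−1} c_{i,j} x_1^j for 2 ≤ i ≤ n. Then a_q is the ideal of k[[x_1,…,x_n]] generated by x_1^q, z_2, …, z_n. -/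
/-- Substitution of a power series `φ` with zero constant term into a power series `f`:
the image of `f` under the continuous `k`-algebra map `k[[s]] → k[[t]]`, `s ↦ φ`. -/
noncomputable def substPS {k : Type*} [CommRing k] (φ f : PowerSeries k) : PowerSeries k :=
  PowerSeries.mk fun m =>
    ∑ n ∈ Finset.range (m + 1), PowerSeries.coeff n f * PowerSeries.coeff m (φ ^ n)

/-- Substitution of power series `g i` (each with zero constant term) for the variables of a
multivariate power series `ψ`: the image of `ψ` under the continuous `k`-algebra map
`k[[x_1,…,x_n]] → k[[t]]`, `x_i ↦ g i`. -/
noncomputable def mvSubst {k : Type*} [CommRing k] {n : ℕ} (g : Fin n → PowerSeries k)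
    (ψ : MvPowerSeries (Fin n) k) : PowerSeries k :=
  PowerSeries.mk fun m => PowerSeries.coeff m
    (MvPolynomial.aeval g (MvPowerSeries.trunc k (Finsupp.equivFunOnFinite.symm fun _ => m + 1) ψ))

/-- The single-variable power series `P`, viewed as a multivariate power series in the
first variable `x_1` (index `0`): this is `P(x_1)`. -/
noncomputable def embedX0 {k : Type*} [CommRing k] {n : ℕ} [NeZero n] (P : PowerSeries k) :
    MvPowerSeries (Fin n) k :=
  fun d => if d = Finsupp.single 0 (d 0) then PowerSeries.coeff (d 0) P else 0

open PowerSeries MvPowerSeries Finset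

section Aux

variable {k : Type*} [CommRing k] {n : ℕ}


variable {k : Type*} [CommRing k] {n : ℕ}

lemma le_order_pow (f : PowerSeries k) (h1 : (1:ℕ∞) ≤ f.order) (j : ℕ) :
    (j : ℕ∞) ≤ (f ^ j).order := by
  induction j with
  | zero => simp [PowerSeries.order_one]
  | succ j ih =>
    rw [pow_succ]
    refine le_trans ?_ (PowerSeries.le_order_mul _ _)
    push_cast
    exact add_le_add ih h1

lemma le_order_prodpow {g : Fin n → PowerSeries k}
    (hg : ∀ i, PowerSeries.constantCoeff (g i) = 0) (d : Fin n →₀ ℕ) :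
    ((∑ i, d i : ℕ) : ℕ∞) ≤ (∏ i, g i ^ d i).order := by
  have h1 : ∀ i, (1:ℕ∞) ≤ (g i).order := by
    intro i
    simpa using (g i).nat_le_order 1 (by intro j hj; interval_cases j; simpa using hg i)
  classical
  induction (Finset.univ : Finset (Fin n)) using Finset.induction_on with
  | empty => simp [PowerSeries.order_one]
  | @insert a s hx ih =>
    rw [Finset.sum_insert hx, Finset.prod_insert hx]
    refine le_trans ?_ (PowerSeries.le_order_mul _ _)
    rw [Nat.cast_add]
    exact add_le_add (le_order_pow _ (h1 a) _) ih

lemma coeff_prodpow_eq_zero {g : Fin n → PowerSeries k}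
    (hg : ∀ i, PowerSeries.constantCoeff (g i) = 0) {d : Fin n →₀ ℕ} {m : ℕ}
    (hm : m < ∑ i, d i) :
    PowerSeries.coeff m (∏ i, g i ^ d i) = 0 := by
  refine PowerSeries.coeff_of_lt_order _ (lt_of_lt_of_le ?_ (le_order_prodpow hg d))
  exact_mod_cast hm


lemma mem_Iio_of_sum_le [NeZero n] {m : ℕ} {d : Fin n →₀ ℕ} (h : ∑ i, d i ≤ m) :
    d ∈ Finset.Iio (Finsupp.equivFunOnFinite.symm fun _ : Fin n => m + 1) := by
  have hd : ∀ i, d i ≤ m := fun i => le_trans (Finset.single_le_sum (fun j _ => Nat.zero_le _) (Finset.mem_univ i)) h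
  rw [Finset.mem_Iio, Finsupp.lt_def]
  constructor
  · intro i
    simp only [Finsupp.equivFunOnFinite_symm_apply_apply]
    exact Nat.lt_succ_of_le (hd i) |>.le
  · refine ⟨⟨0, Nat.pos_of_ne_zero (NeZero.ne n)⟩, ?_⟩
    simp only [Finsupp.equivFunOnFinite_symm_apply_apply]
    exact Nat.lt_succ_of_le (hd _)

lemma coeff_mvSubst [NeZero n] {g : Fin n → PowerSeries k}
    (hg : ∀ i, PowerSeries.constantCoeff (g i) = 0) (ψ : MvPowerSeries (Fin n) k) (m : ℕ)
    (S : Finset (Fin n →₀ ℕ)) (hS : ∀ d : Fin n →₀ ℕ, ∑ i, d i ≤ m → d ∈ S) :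
    PowerSeries.coeff m (mvSubst g ψ) =
      ∑ d ∈ S, MvPowerSeries.coeff d ψ * PowerSeries.coeff m (∏ i, g i ^ d i) := by
  classical
  set f : (Fin n →₀ ℕ) → k := fun d =>
    MvPowerSeries.coeff d ψ * PowerSeries.coeff m (∏ i, g i ^ d i) with hf
  set N : Fin n →₀ ℕ := Finsupp.equivFunOnFinite.symm fun _ : Fin n => m + 1 with hNdef
  have htr : (MvPowerSeries.trunc k N ψ : MvPolynomial (Fin n) k)
      = ∑ d ∈ Finset.Iio N, MvPolynomial.monomial d (MvPowerSeries.coeff d ψ) := rfl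
  have h1 : PowerSeries.coeff m (mvSubst g ψ) = ∑ d ∈ Finset.Iio N, f d := by
    rw [mvSubst, PowerSeries.coeff_mk, ← hNdef, htr, map_sum, map_sum]
    refine Finset.sum_congr rfl fun d _ => ?_
    rw [MvPolynomial.aeval_monomial, Finsupp.prod_fintype _ _ (fun i => pow_zero _),
      PowerSeries.algebraMap_apply, Algebra.algebraMap_self, RingHom.id_apply,
      PowerSeries.coeff_C_mul]
  have hvan : ∀ d : Fin n →₀ ℕ, m < ∑ i, d i → f d = 0 := fun d hd => by
    rw [hf]; dsimp only; rw [coeff_prodpow_eq_zero hg hd, mul_zero]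
  set T := S ∩ Finset.Iio N with hT
  have h2 : ∑ d ∈ Finset.Iio N, f d = ∑ d ∈ T, f d := by
    refine (Finset.sum_subset Finset.inter_subset_right fun d hd hdn => ?_).symm
    refine hvan d ?_
    by_contra h
    exact hdn (Finset.mem_inter.2 ⟨hS d (le_of_not_gt h), hd⟩)
  have h3 : ∑ d ∈ S, f d = ∑ d ∈ T, f d := by
    refine (Finset.sum_subset Finset.inter_subset_left fun d hd hdn => ?_).symm
    refine hvan d ?_
    by_contra h
    exact hdn (Finset.mem_inter.2 ⟨hd, mem_Iio_of_sum_le (le_of_not_gt h)⟩)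
  rw [h1, h2, h3]


lemma mvSubst_mul [NeZero n] {g : Fin n → PowerSeries k}
    (hg : ∀ i, PowerSeries.constantCoeff (g i) = 0) (φ ψ : MvPowerSeries (Fin n) k) :
    mvSubst g (φ * ψ) = mvSubst g φ * mvSubst g ψ := by
  classical
  ext m
  set N : Fin n →₀ ℕ := Finsupp.equivFunOnFinite.symm fun _ : Fin n => m + 1 with hN
  set T := Finset.Iio N with hTdef
  have hT : ∀ d : Fin n →₀ ℕ, ∑ i, d i ≤ m → d ∈ T := fun d hd => mem_Iio_of_sum_le hd
  set F : (Fin n →₀ ℕ) × (Fin n →₀ ℕ) → k := fun p =>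
    MvPowerSeries.coeff p.1 φ * MvPowerSeries.coeff p.2 ψ *
      PowerSeries.coeff m (∏ i, g i ^ (p.1 + p.2) i) with hF
  have hsum : ∀ d1 d2 : Fin n →₀ ℕ, (∑ i, (d1 + d2) i) = (∑ i, d1 i) + ∑ i, d2 i := by
    intro d1 d2
    simp [Finsupp.add_apply, Finset.sum_add_distrib]
  set cond : (Fin n →₀ ℕ) × (Fin n →₀ ℕ) → Prop := fun p => (∑ i, p.1 i) + (∑ i, p.2 i) ≤ m
    with hcond
  have hvan : ∀ p : (Fin n →₀ ℕ) × (Fin n →₀ ℕ), ¬ cond p → F p = 0 := by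
    intro p hp
    rw [hF]
    dsimp only
    rw [coeff_prodpow_eq_zero hg (by rw [hsum]; exact lt_of_not_ge hp), mul_zero]
  -- LHS
  have hL : PowerSeries.coeff m (mvSubst g (φ * ψ))
      = ∑ d ∈ T, ∑ p ∈ Finset.HasAntidiagonal.antidiagonal d, F p := by
    rw [coeff_mvSubst hg _ m T hT]
    refine Finset.sum_congr rfl fun d _ => ?_
    rw [MvPowerSeries.coeff_mul, Finset.sum_mul]
    refine Finset.sum_congr rfl fun p hp => ?_
    rw [Finset.HasAntidiagonal.mem_antidiagonal] at hp
    rw [hF]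
    dsimp only
    rw [hp]
  -- RHS
  have hR : PowerSeries.coeff m (mvSubst g φ * mvSubst g ψ)
      = ∑ p ∈ T ×ˢ T, F p := by
    rw [PowerSeries.coeff_mul]
    have step : ∀ q ∈ Finset.HasAntidiagonal.antidiagonal m,
        PowerSeries.coeff q.1 (mvSubst g φ) * PowerSeries.coeff q.2 (mvSubst g ψ)
          = ∑ d1 ∈ T, ∑ d2 ∈ T, (MvPowerSeries.coeff d1 φ * MvPowerSeries.coeff d2 ψ) *
              (PowerSeries.coeff q.1 (∏ i, g i ^ d1 i) *
                PowerSeries.coeff q.2 (∏ i, g i ^ d2 i)) := by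
      intro q hq
      rw [Finset.HasAntidiagonal.mem_antidiagonal] at hq
      rw [coeff_mvSubst hg φ q.1 T (fun d hd => hT d (le_trans hd (by omega))),
        coeff_mvSubst hg ψ q.2 T (fun d hd => hT d (le_trans hd (by omega))),
        Finset.sum_mul_sum]
      refine Finset.sum_congr rfl fun d1 _ => Finset.sum_congr rfl fun d2 _ => by ring
    have hprod : ∑ p ∈ T ×ˢ T, F p = ∑ d1 ∈ T, ∑ d2 ∈ T, F (d1, d2) := Finset.sum_product _ _ _
    rw [Finset.sum_congr rfl step, Finset.sum_comm, hprod]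
    refine Finset.sum_congr rfl fun d1 _ => ?_
    rw [Finset.sum_comm]
    refine Finset.sum_congr rfl fun d2 _ => ?_
    rw [← Finset.mul_sum, ← PowerSeries.coeff_mul, ← Finset.prod_mul_distrib]
    rw [hF]
    dsimp only
    refine congrArg _ (congrArg _ (Finset.prod_congr rfl fun i _ => ?_))
    rw [Finsupp.add_apply, pow_add]
  rw [hL, hR]
  -- now equate the two index sets
  have hsub1 : ∀ d ∈ T, ∑ p ∈ Finset.HasAntidiagonal.antidiagonal d, F p
      = ∑ p ∈ (Finset.HasAntidiagonal.antidiagonal d).filter cond, F p := by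
    intro d _
    exact (Finset.sum_filter_of_ne (fun p _ hp => by_contra fun hc => hp (hvan p hc))).symm
  have hsub2 : ∑ p ∈ T ×ˢ T, F p = ∑ p ∈ (T ×ˢ T).filter cond, F p :=
    (Finset.sum_filter_of_ne (fun p _ hp => by_contra fun hc => hp (hvan p hc))).symm
  rw [Finset.sum_congr rfl hsub1, hsub2, ← Finset.sum_biUnion]
  · refine Finset.sum_congr ?_ fun _ _ => rfl
    ext p
    simp only [Finset.mem_biUnion, Finset.mem_filter, Finset.HasAntidiagonal.mem_antidiagonal,
      Finset.mem_product]
    constructor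
    · rintro ⟨d, hdT, hpd, hc⟩
      have hc' := hc
      rw [hcond] at hc'
      exact ⟨⟨hT p.1 (by omega), hT p.2 (by omega)⟩, hc⟩
    · rintro ⟨-, hc⟩
      have hc' := hc
      rw [hcond] at hc'
      exact ⟨p.1 + p.2, hT _ (by rw [hsum]; exact hc'), rfl, hc⟩
  · intro d1 h1 d2 h2 hne
    rw [Function.onFun, Finset.disjoint_left]
    rintro p hp1 hp2
    rw [Finset.mem_filter, Finset.HasAntidiagonal.mem_antidiagonal] at hp1 hp2
    exact hne (hp1.1 ▸ hp2.1)

lemma mvSubst_add {g : Fin n → PowerSeries k} (φ ψ : MvPowerSeries (Fin n) k) :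
    mvSubst g (φ + ψ) = mvSubst g φ + mvSubst g ψ := by
  ext m
  simp [mvSubst, map_add]

lemma mvSubst_monomial [NeZero n] {g : Fin n → PowerSeries k}
    (hg : ∀ i, PowerSeries.constantCoeff (g i) = 0) (e : Fin n →₀ ℕ) (c : k) :
    mvSubst g (MvPowerSeries.monomial e c) = PowerSeries.C c * ∏ i, g i ^ e i := by
  classical
  ext m
  rw [coeff_mvSubst hg _ m (insert e (Finset.Iio (Finsupp.equivFunOnFinite.symm
      fun _ : Fin n => m + 1))) (fun d hd => Finset.mem_insert_of_mem (mem_Iio_of_sum_le hd))]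
  rw [Finset.sum_eq_single_of_mem e (Finset.mem_insert_self _ _)]
  · rw [MvPowerSeries.coeff_monomial, if_pos rfl, PowerSeries.coeff_C_mul]
  · intro d _ hd
    rw [MvPowerSeries.coeff_monomial, if_neg hd, zero_mul]

lemma mvSubst_one [NeZero n] {g : Fin n → PowerSeries k}
    (hg : ∀ i, PowerSeries.constantCoeff (g i) = 0) :
    mvSubst g (1 : MvPowerSeries (Fin n) k) = 1 := by
  have h : (1 : MvPowerSeries (Fin n) k) = MvPowerSeries.monomial 0 1 := by
    ext d
    rw [MvPowerSeries.coeff_one, MvPowerSeries.coeff_monomial]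
  rw [h, mvSubst_monomial hg]
  simp

lemma mvSubst_C [NeZero n] {g : Fin n → PowerSeries k}
    (hg : ∀ i, PowerSeries.constantCoeff (g i) = 0) (c : k) :
    mvSubst g (MvPowerSeries.C c) = PowerSeries.C c := by
  have h : (MvPowerSeries.C c : MvPowerSeries (Fin n) k) = MvPowerSeries.monomial 0 c := rfl
  rw [h, mvSubst_monomial hg]
  simp

lemma mvSubst_X [NeZero n] {g : Fin n → PowerSeries k}
    (hg : ∀ i, PowerSeries.constantCoeff (g i) = 0) (s : Fin n) :
    mvSubst g (MvPowerSeries.X s) = g s := by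
  have h : (MvPowerSeries.X s : MvPowerSeries (Fin n) k)
      = MvPowerSeries.monomial (Finsupp.single s 1) 1 := rfl
  rw [h, mvSubst_monomial hg, map_one, one_mul]
  rw [Finset.prod_eq_single s (fun i _ hi => by
    rw [Finsupp.single_apply, if_neg (Ne.symm hi), pow_zero]) (by simp)]
  rw [Finsupp.single_apply, if_pos rfl, pow_one]

/-- `mvSubst` as an algebra hom. -/
noncomputable def mvSubstAlgHom [NeZero n] (g : Fin n → PowerSeries k)
    (hg : ∀ i, PowerSeries.constantCoeff (g i) = 0) :
    MvPowerSeries (Fin n) k →ₐ[k] PowerSeries k where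
  toFun := mvSubst g
  map_one' := mvSubst_one hg
  map_mul' := mvSubst_mul hg
  map_zero' := by ext m; simp [mvSubst, map_zero]
  map_add' := mvSubst_add
  commutes' := fun c => by
    rw [MvPowerSeries.algebraMap_apply, PowerSeries.algebraMap_apply]
    simp only [Algebra.algebraMap_self, RingHom.id_apply]
    exact mvSubst_C hg c

lemma exists_decomp (q : ℕ) (f : MvPowerSeries (Fin n) k)
    (hf : ∀ d : Fin n →₀ ℕ, (∀ i, d i < q) → MvPowerSeries.coeff d f = 0) :
    ∃ h : Fin n → MvPowerSeries (Fin n) k,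
      f = ∑ i, (MvPowerSeries.X i) ^ q * h i := by
  classical
  set h : Fin n → MvPowerSeries (Fin n) k := fun i e' =>
    if ∀ j, j < i → e' j < q then MvPowerSeries.coeff (e' + Finsupp.single i q) f else 0
    with hh
  refine ⟨h, ?_⟩
  ext e
  rw [map_sum]
  have hterm : ∀ i, MvPowerSeries.coeff e ((MvPowerSeries.X i : MvPowerSeries (Fin n) k) ^ q * h i)
      = if q ≤ e i ∧ ∀ j, j < i → e j < q then MvPowerSeries.coeff e f else 0 := by
    intro i
    rw [MvPowerSeries.X_pow_eq, MvPowerSeries.coeff_monomial_mul]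
    by_cases h1 : Finsupp.single i q ≤ e
    · rw [if_pos h1, one_mul]
      have he : q ≤ e i := by
        have := h1 i
        rwa [Finsupp.single_apply, if_pos rfl] at this
      have hsub : ∀ j, j < i → (e - Finsupp.single i q) j = e j := fun j hj => by
        rw [Finsupp.tsub_apply, Finsupp.single_apply, if_neg (fun hij => absurd hij.symm hj.ne),
          Nat.sub_zero]
      have hc : MvPowerSeries.coeff (e - Finsupp.single i q) (h i)
          = if (∀ j, j < i → (e - Finsupp.single i q) j < q)
              then MvPowerSeries.coeff ((e - Finsupp.single i q) + Finsupp.single i q) f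
              else 0 := rfl
      rw [hc, tsub_add_cancel_of_le h1]
      by_cases h2 : ∀ j, j < i → e j < q
      · rw [if_pos (fun j hj => by rw [hsub j hj]; exact h2 j hj), if_pos ⟨he, h2⟩]
      · rw [if_neg (fun hcd => h2 (fun j hj => by rw [← hsub j hj]; exact hcd j hj)),
          if_neg (fun hcd => h2 hcd.2)]
    · rw [if_neg h1]
      have hne : ¬ q ≤ e i := fun hle => h1 (fun j => by
        rw [Finsupp.single_apply]
        split
        · next hij => exact hij ▸ hle
        · exact Nat.zero_le _)
      rw [if_neg (fun hcd => hne hcd.1)]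
  rw [Finset.sum_congr rfl (fun i _ => hterm i)]
  by_cases hcase : ∀ i, e i < q
  · rw [hf e hcase]
    simp
  · push_neg at hcase
    obtain ⟨i1, hi1⟩ := hcase
    set S := Finset.univ.filter (fun i : Fin n => q ≤ e i) with hS
    have hSne : S.Nonempty := ⟨i1, by simp [hS, hi1]⟩
    set i0 := S.min' hSne with hi0def
    have hi0 : q ≤ e i0 := (Finset.mem_filter.1 (S.min'_mem hSne)).2
    have hmin : ∀ j, j < i0 → e j < q := fun j hj => by
      by_contra hcon
      exact absurd (S.min'_le j (Finset.mem_filter.2 ⟨Finset.mem_univ _, le_of_not_gt hcon⟩))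
        (not_le.2 hj)
    rw [Finset.sum_eq_single_of_mem i0 (Finset.mem_univ _)]
    · rw [if_pos ⟨hi0, hmin⟩]
    · intro i _ hi
      have hcc : ¬ (q ≤ e i ∧ ∀ j, j < i → e j < q) := by
        rintro ⟨hcd1, hcd2⟩
        have hle : i0 ≤ i := S.min'_le i (Finset.mem_filter.2 ⟨Finset.mem_univ _, hcd1⟩)
        exact absurd hi0 (not_le.2 (hcd2 i0 (lt_of_le_of_ne hle (Ne.symm hi))))
      exact if_neg hcc

lemma aeval_X_powerSeries {k : Type*} [CommRing k] (p : Polynomial k) :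
    Polynomial.aeval (PowerSeries.X : PowerSeries k) p = ↑p := by
  have h1 : (Polynomial.coeToPowerSeries.algHom k : Polynomial k →ₐ[k] PowerSeries k)
      = Polynomial.aeval PowerSeries.X := by
    apply Polynomial.algHom_ext
    simp [Polynomial.coeToPowerSeries.algHom_apply]
  rw [← h1, Polynomial.coeToPowerSeries.algHom_apply]
  simp [PowerSeries.map_id]

lemma coe_mvPolynomial_eq_aeval {k : Type*} [CommRing k] {n : ℕ}
    (p : MvPolynomial (Fin n) k) :
    (↑p : MvPowerSeries (Fin n) k) = MvPolynomial.aeval MvPowerSeries.X p := by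
  have h1 : (MvPolynomial.coeToMvPowerSeries.algHom k :
      MvPolynomial (Fin n) k →ₐ[k] MvPowerSeries (Fin n) k)
      = MvPolynomial.aeval MvPowerSeries.X := by
    apply MvPolynomial.algHom_ext
    intro i
    simp [MvPolynomial.coeToMvPowerSeries.algHom_apply]
  rw [← h1, MvPolynomial.coeToMvPowerSeries.algHom_apply]
  simp [MvPowerSeries.map_id]


end Aux

/-- With `v(ψ) = ord_t ψ(t, P_2(t),…,P_n(t))` for fixed
`P_i = ∑_{j≥1} c_{i,j} t^j ∈ t·k[[t]]`, the valuation ideal `a_q = {f : v(f) ≥ q}` is generated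
by `x_1^q, z_2, …, z_n`, where `z_i = x_i − ∑_{j=1}^{q-1} c_{i,j} x_1^j`
(i.e. `x_1` substituted into the truncation of `P_i` below degree `q`). -/
theorem valuation_ideal_generated_by
    (k : Type) [Field k] {n : ℕ} [NeZero n]
    (P : Fin n → PowerSeries k) (hP0 : P 0 = PowerSeries.X)
    (hPc : ∀ i, PowerSeries.constantCoeff (P i) = 0)
    (q : ℕ) (hq : 0 < q) :
    {ψ : MvPowerSeries (Fin n) k | (q : ℕ∞) ≤ (mvSubst P ψ).order} =
      ↑(Ideal.span (insert (MvPowerSeries.X 0 ^ q)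
        {f : MvPowerSeries (Fin n) k | ∃ i : Fin n, i ≠ 0 ∧
          f = MvPowerSeries.X i -
            Polynomial.aeval (MvPowerSeries.X 0) (PowerSeries.trunc q (P i))})) := by
  classical
  set S : MvPowerSeries (Fin n) k →ₐ[k] PowerSeries k := mvSubstAlgHom P hPc with hSdef
  have hSapp : ∀ ψ, mvSubst P ψ = S ψ := fun _ => rfl
  set Q : Fin n → MvPowerSeries (Fin n) k := fun i =>
    Polynomial.aeval (MvPowerSeries.X 0) (PowerSeries.trunc q (P i)) with hQdef
  set I : Ideal (MvPowerSeries (Fin n) k) := Ideal.span (insert (MvPowerSeries.X 0 ^ q)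
    {f : MvPowerSeries (Fin n) k | ∃ i : Fin n, i ≠ 0 ∧ f = MvPowerSeries.X i - Q i}) with hIdef
  -- substitution of polynomial-in-X0 composes
  have hSpoly : ∀ p : Polynomial k,
      S (Polynomial.aeval (MvPowerSeries.X 0) p) = ↑p := by
    intro p
    have hx : S (MvPowerSeries.X 0) = PowerSeries.X := by
      rw [hSdef]; show mvSubst P (MvPowerSeries.X 0) = _
      rw [mvSubst_X hPc 0, hP0]
    rw [← Polynomial.aeval_algHom_apply S (MvPowerSeries.X 0) p, hx, aeval_X_powerSeries]
  have hx : S (MvPowerSeries.X 0) = PowerSeries.X := by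
    rw [hSdef]; show mvSubst P (MvPowerSeries.X 0) = _
    rw [mvSubst_X hPc 0, hP0]
  have hSX : ∀ i, S (MvPowerSeries.X i) = P i := fun i => mvSubst_X hPc i
  -- easy direction : I ⊆ a_q
  have hIle : ∀ f ∈ I, (q : ℕ∞) ≤ (S f).order := by
    intro f hf
    rw [hIdef] at hf
    refine Submodule.span_induction ?_ ?_ ?_ ?_ hf
    · intro g hg
      rcases Set.mem_insert_iff.1 hg with rfl | hg'
      · rw [map_pow, hx, PowerSeries.order_X_pow]
      · obtain ⟨i, hi, rfl⟩ := hg'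
        rw [map_sub, hSX i, hSpoly (PowerSeries.trunc q (P i))]
        refine PowerSeries.nat_le_order _ q fun j hj => ?_
        rw [map_sub, Polynomial.coeff_coe, PowerSeries.coeff_trunc, if_pos hj, sub_self]
    · rw [map_zero, PowerSeries.order_zero]
      exact le_top
    · intro x y hxm hym hox hoy
      rw [map_add]
      exact le_trans (le_min hox hoy) (PowerSeries.min_order_le_order_add _ _)
    · intro a x hxm hox
      rw [smul_eq_mul, map_mul]
      exact le_trans hox (le_trans le_add_self (PowerSeries.le_order_mul _ _))
  -- hard direction
  have hle : ∀ ψ : MvPowerSeries (Fin n) k, (q : ℕ∞) ≤ (S ψ).order → ψ ∈ I := by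
    intro ψ hψ
    have hXq0 : (MvPowerSeries.X 0 : MvPowerSeries (Fin n) k) ^ q ∈ I := by
      rw [hIdef]
      exact Ideal.subset_span (Set.mem_insert _ _)
    have hzmem : ∀ i : Fin n, i ≠ 0 → MvPowerSeries.X i - Q i ∈ I := by
      intro i hi
      rw [hIdef]
      exact Ideal.subset_span (Set.mem_insert_iff.2 (Or.inr ⟨i, hi, rfl⟩))
    have hQmem : ∀ i : Fin n, (Q i) ^ q ∈ I := by
      intro i
      have hc0 : (PowerSeries.trunc q (P i)).coeff 0 = 0 := by
        rw [PowerSeries.coeff_trunc, if_pos hq, PowerSeries.coeff_zero_eq_constantCoeff]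
        exact hPc i
      obtain ⟨r, hr⟩ := (Polynomial.X_dvd_iff).2 hc0
      have hQi : Q i = MvPowerSeries.X 0 * Polynomial.aeval (MvPowerSeries.X 0) r := by
        rw [hQdef]
        dsimp only
        rw [hr, map_mul, Polynomial.aeval_X]
      rw [hQi, mul_pow]
      exact Ideal.mul_mem_right _ _ hXq0
    have hXiq : ∀ i : Fin n, (MvPowerSeries.X i : MvPowerSeries (Fin n) k) ^ q ∈ I := by
      intro i
      by_cases hi : i = 0
      · rw [hi]; exact hXq0
      · have h1 : Ideal.Quotient.mk I (MvPowerSeries.X i ^ q)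
            = Ideal.Quotient.mk I ((Q i) ^ q) := by
          rw [map_pow, map_pow]
          congr 1
          rw [Ideal.Quotient.mk_eq_mk_iff_sub_mem]
          exact hzmem i hi
        have h2 : Ideal.Quotient.mk I ((Q i) ^ q) = 0 :=
          Ideal.Quotient.eq_zero_iff_mem.2 (hQmem i)
        exact Ideal.Quotient.eq_zero_iff_mem.1 (h1.trans h2)
    set Nq : Fin n →₀ ℕ := Finsupp.equivFunOnFinite.symm fun _ : Fin n => q with hNq
    set tp : MvPolynomial (Fin n) k := MvPowerSeries.trunc k Nq ψ with htp
    have hvan : ∀ d : Fin n →₀ ℕ, (∀ i, d i < q) →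
        MvPowerSeries.coeff d (ψ - (tp : MvPowerSeries (Fin n) k)) = 0 := by
      intro d hd
      have hlt : d < Nq := by
        rw [Finsupp.lt_def]
        constructor
        · intro i
          simp only [hNq, Finsupp.equivFunOnFinite_symm_apply_apply]
          exact (hd i).le
        · refine ⟨⟨0, Nat.pos_of_ne_zero (NeZero.ne n)⟩, ?_⟩
          simp only [hNq, Finsupp.equivFunOnFinite_symm_apply_apply]
          exact hd _
      rw [map_sub, MvPolynomial.coeff_coe, htp, MvPowerSeries.coeff_trunc, if_pos hlt, sub_self]
    have hfI : ψ - ↑tp ∈ I := by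
      obtain ⟨h, hdec⟩ := exists_decomp q (ψ - (tp : MvPowerSeries (Fin n) k)) hvan
      rw [hdec]
      exact Ideal.sum_mem _ fun i _ => Ideal.mul_mem_right _ _ (hXiq i)
    set c : Fin n → Polynomial k := fun i =>
      if i = 0 then Polynomial.X else PowerSeries.trunc q (P i) with hc
    set r : Polynomial k := MvPolynomial.aeval c tp with hrdef
    set b : Fin n → MvPowerSeries (Fin n) k := fun i =>
      if i = 0 then MvPowerSeries.X 0 else Q i with hb
    have hbr : Polynomial.aeval (MvPowerSeries.X 0) r = MvPolynomial.aeval b tp := by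
      rw [hrdef, MvPolynomial.comp_aeval_apply (f := c) (φ := Polynomial.aeval (MvPowerSeries.X 0)) (p := tp)]
      have hfun : (fun i => Polynomial.aeval (MvPowerSeries.X 0) (c i)) = b := by
        funext i
        rw [hc, hb]
        dsimp only
        by_cases hi : i = 0
        · rw [if_pos hi, if_pos hi, Polynomial.aeval_X]
        · rw [if_neg hi, if_neg hi, hQdef]
      rw [hfun]
    have hmk : Ideal.Quotient.mk I ψ
        = Ideal.Quotient.mk I (Polynomial.aeval (MvPowerSeries.X 0) r) := by
      have e1 : Ideal.Quotient.mk I ψ = Ideal.Quotient.mk I ↑tp :=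
        (Ideal.Quotient.mk_eq_mk_iff_sub_mem _ _).2 hfI
      have e2 : Ideal.Quotient.mk I (↑tp : MvPowerSeries (Fin n) k)
          = Ideal.Quotient.mkₐ k I (MvPolynomial.aeval MvPowerSeries.X tp) := by
        rw [coe_mvPolynomial_eq_aeval]
        rfl
      have e3 : Ideal.Quotient.mkₐ k I (MvPolynomial.aeval MvPowerSeries.X tp)
          = Ideal.Quotient.mkₐ k I (MvPolynomial.aeval b tp) := by
        rw [MvPolynomial.comp_aeval_apply (f := MvPowerSeries.X) (φ := Ideal.Quotient.mkₐ k I) (p := tp),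
          MvPolynomial.comp_aeval_apply (f := b) (φ := Ideal.Quotient.mkₐ k I) (p := tp)]
        have hfun2 : (fun i => Ideal.Quotient.mkₐ k I (MvPowerSeries.X i))
            = fun i => Ideal.Quotient.mkₐ k I (b i) := by
          funext i
          by_cases hi : i = 0
          · rw [hb]
            dsimp only
            rw [if_pos hi, hi]
          · rw [hb]
            dsimp only
            rw [if_neg hi]
            show Ideal.Quotient.mk I (MvPowerSeries.X i) = Ideal.Quotient.mk I (Q i)
            rw [Ideal.Quotient.mk_eq_mk_iff_sub_mem]
            exact hzmem i hi
        rw [hfun2]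
      rw [e1, e2, e3, hbr]
      rfl
    have hdiff : ψ - Polynomial.aeval (MvPowerSeries.X 0) r ∈ I :=
      (Ideal.Quotient.mk_eq_mk_iff_sub_mem _ _).1 hmk
    have hg0 : (q : ℕ∞) ≤ ((↑r : PowerSeries k)).order := by
      rw [← hSpoly r]
      refine PowerSeries.le_order _ _ fun j hj => ?_
      have c1 : PowerSeries.coeff j (S ψ) = 0 :=
        PowerSeries.coeff_of_lt_order _ (lt_of_lt_of_le hj hψ)
      have c2 : PowerSeries.coeff j
          (S (ψ - Polynomial.aeval (MvPowerSeries.X 0) r)) = 0 :=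
        PowerSeries.coeff_of_lt_order _ (lt_of_lt_of_le hj (hIle _ hdiff))
      have e4 : S (Polynomial.aeval (MvPowerSeries.X 0) r)
          = S ψ - S (ψ - Polynomial.aeval (MvPowerSeries.X 0) r) := by
        rw [map_sub]
        ring
      rw [e4, map_sub, c1, c2, sub_zero]
    have hrc : ∀ j < q, r.coeff j = 0 := by
      intro j hj
      have hj' : (j : ℕ∞) < q := by exact_mod_cast hj
      have := PowerSeries.coeff_of_lt_order j (lt_of_lt_of_le hj' hg0)
      rwa [Polynomial.coeff_coe] at this
    obtain ⟨r2, hr2⟩ := Polynomial.X_pow_dvd_iff.2 hrc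
    have hg0I : Polynomial.aeval (MvPowerSeries.X 0) r ∈ I := by
      have : Polynomial.aeval (MvPowerSeries.X 0) r
          = (MvPowerSeries.X (0 : Fin n) : MvPowerSeries (Fin n) k) ^ q
              * Polynomial.aeval (MvPowerSeries.X 0) r2 := by
        rw [hr2, map_mul, map_pow, Polynomial.aeval_X]
      rw [this]
      exact Ideal.mul_mem_right _ _ hXq0
    have hsplit : ψ = (ψ - Polynomial.aeval (MvPowerSeries.X 0) r)
        + Polynomial.aeval (MvPowerSeries.X 0) r := by ring
    rw [hsplit]
    exact Ideal.add_mem _ hdiff hg0I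
  ext ψ
  simp only [Set.mem_setOf_eq, SetLike.mem_coe]
  rw [hSapp]
  exact ⟨fun h => hle ψ h, fun h => hIle ψ h⟩
end

section
/- Let k be a field, let α*: k[[x_1,…,x_n]] → k[[t]] be a local k-algebra homomorphism with ord_t(α*(x_1)) = 1, and let v = ord_t ∘ α*. Then there exist P_i(t) ∈ t·k[[t]] for 2 ≤ i ≤ n such that α*(x_i) = P_i(α*(x_1)) for all 2 ≤ i ≤ n, and for every ψ ∈ k[[x_1,…,x_n]], v(ψ) = ord_t ψ(t, P_2(t), …, P_n(t)). -/
namespace ArcAux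

open PowerSeries Finset

variable {k : Type*} [Field k]

lemma coeff_eq_zero_of_X_pow_dvd {f : PowerSeries k} {c m : ℕ} (h : (X : PowerSeries k) ^ c ∣ f)
    (hm : m < c) : PowerSeries.coeff m f = 0 := by
  obtain ⟨g, rfl⟩ := h
  rw [PowerSeries.coeff_mul]
  refine Finset.sum_eq_zero ?_
  rintro ⟨a, b⟩ hab
  have hab' : a + b = m := Finset.HasAntidiagonal.mem_antidiagonal.mp hab
  rw [PowerSeries.coeff_X_pow, if_neg (by omega), zero_mul]

lemma coeff_pow_eq_zero {φ : PowerSeries k} (hφ : PowerSeries.constantCoeff φ = 0)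
    {m j : ℕ} (h : m < j) : PowerSeries.coeff m (φ ^ j) = 0 :=
  coeff_eq_zero_of_X_pow_dvd (pow_dvd_pow_of_dvd (PowerSeries.X_dvd_iff.mpr hφ) j) h

lemma coeff_substPS (φ f : PowerSeries k) (m : ℕ) :
    PowerSeries.coeff m (substPS φ f) =
      ∑ j ∈ Finset.range (m + 1), PowerSeries.coeff j f * PowerSeries.coeff m (φ ^ j) := by
  simp [substPS]

lemma coeff_substPS_congr {φ f g : PowerSeries k} {m : ℕ}
    (h : ∀ j ≤ m, PowerSeries.coeff j f = PowerSeries.coeff j g) :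
    PowerSeries.coeff m (substPS φ f) = PowerSeries.coeff m (substPS φ g) := by
  rw [coeff_substPS, coeff_substPS]
  refine Finset.sum_congr rfl fun j hj => ?_
  rw [h j (Nat.lt_succ_iff.mp (Finset.mem_range.mp hj))]

lemma constantCoeff_substPS (φ f : PowerSeries k) :
    PowerSeries.constantCoeff (substPS φ f) = PowerSeries.constantCoeff f := by
  have := coeff_substPS φ f 0
  simp only [Finset.range_one, Finset.sum_singleton, pow_zero, PowerSeries.coeff_zero_eq_constantCoeff,
    map_one, mul_one] at this
  simpa using this

lemma coeff_aeval_poly {φ : PowerSeries k} (hφ : PowerSeries.constantCoeff φ = 0)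
    (p : Polynomial k) (m : ℕ) :
    PowerSeries.coeff m (Polynomial.aeval φ p) =
      ∑ j ∈ Finset.range (m + 1), p.coeff j * PowerSeries.coeff m (φ ^ j) := by
  have h1 : Polynomial.aeval φ p = ∑ j ∈ p.support, p.coeff j • φ ^ j := by
    rw [Polynomial.aeval_def, Polynomial.eval₂_eq_sum, Polynomial.sum_def]
    refine Finset.sum_congr rfl fun j _ => ?_
    rw [PowerSeries.smul_eq_C_mul]
    rfl
  rw [h1, map_sum]
  simp only [LinearMap.map_smul, smul_eq_mul]
  calc
    ∑ j ∈ p.support, p.coeff j * PowerSeries.coeff m (φ ^ j)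
        = ∑ j ∈ p.support ∩ Finset.range (m + 1), p.coeff j * PowerSeries.coeff m (φ ^ j) := by
          refine (Finset.sum_subset Finset.inter_subset_left fun j hj hj' => ?_).symm
          have : m < j := by
            by_contra hle
            exact hj' (Finset.mem_inter.mpr ⟨hj, Finset.mem_range.mpr (by omega)⟩)
          rw [coeff_pow_eq_zero hφ this, mul_zero]
    _ = ∑ j ∈ Finset.range (m + 1), p.coeff j * PowerSeries.coeff m (φ ^ j) := by
          refine Finset.sum_subset Finset.inter_subset_right fun j hj hj' => ?_
          have : p.coeff j = 0 := by
            by_contra hne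
            exact hj' (Finset.mem_inter.mpr ⟨Polynomial.mem_support_iff.mpr hne, hj⟩)
          rw [this, zero_mul]

lemma coeff_substPS_eq_aeval_trunc {φ : PowerSeries k} (hφ : PowerSeries.constantCoeff φ = 0)
    (f : PowerSeries k) {m N : ℕ} (hmN : m < N) :
    PowerSeries.coeff m (substPS φ f) =
      PowerSeries.coeff m (Polynomial.aeval φ (PowerSeries.trunc N f)) := by
  rw [coeff_substPS, coeff_aeval_poly hφ]
  refine Finset.sum_congr rfl fun j hj => ?_
  have hjm : j ≤ m := Nat.lt_succ_iff.mp (Finset.mem_range.mp hj)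
  rw [PowerSeries.coeff_trunc, if_pos (by omega)]

lemma substPS_mul {φ : PowerSeries k} (hφ : PowerSeries.constantCoeff φ = 0)
    (f g : PowerSeries k) : substPS φ (f * g) = substPS φ f * substPS φ g := by
  ext m
  have key : PowerSeries.coeff m (substPS φ (f * g)) =
      PowerSeries.coeff m
        (Polynomial.aeval φ (PowerSeries.trunc (m+1) f * PowerSeries.trunc (m+1) g)) := by
    rw [coeff_substPS, coeff_aeval_poly hφ]
    refine Finset.sum_congr rfl fun j hj => ?_
    have hjm : j ≤ m := Nat.lt_succ_iff.mp (Finset.mem_range.mp hj)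
    congr 1
    rw [Polynomial.coeff_mul, PowerSeries.coeff_mul]
    refine Finset.sum_congr rfl ?_
    rintro ⟨a, b⟩ hab
    have hab' : a + b = j := Finset.HasAntidiagonal.mem_antidiagonal.mp hab
    rw [PowerSeries.coeff_trunc, if_pos (by omega), PowerSeries.coeff_trunc, if_pos (by omega)]
  rw [key, map_mul, PowerSeries.coeff_mul, PowerSeries.coeff_mul]
  refine Finset.sum_congr rfl ?_
  rintro ⟨a, b⟩ hab
  have hab' : a + b = m := Finset.HasAntidiagonal.mem_antidiagonal.mp hab
  rw [← coeff_substPS_eq_aeval_trunc hφ f (by omega), ← coeff_substPS_eq_aeval_trunc hφ g (by omega)]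

lemma substPS_add (φ f g : PowerSeries k) : substPS φ (f + g) = substPS φ f + substPS φ g := by
  ext m
  rw [map_add, coeff_substPS, coeff_substPS, coeff_substPS, ← Finset.sum_add_distrib]
  refine Finset.sum_congr rfl fun j _ => ?_
  rw [map_add, add_mul]

lemma substPS_one (φ : PowerSeries k) : substPS φ 1 = 1 := by
  ext m
  rw [coeff_substPS]
  rw [Finset.sum_eq_single 0]
  · simp
  · intro j _ hj
    rw [PowerSeries.coeff_one, if_neg hj, zero_mul]
  · intro h
    exact absurd (Finset.mem_range.mpr (Nat.succ_pos m)) h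

lemma substPS_C (φ : PowerSeries k) (r : k) : substPS φ (PowerSeries.C r) = PowerSeries.C r := by
  ext m
  rw [coeff_substPS, Finset.sum_eq_single 0]
  · simp [PowerSeries.coeff_C, PowerSeries.coeff_one]
  · intro j _ hj
    rw [PowerSeries.coeff_C, if_neg hj, zero_mul]
  · intro h
    exact absurd (Finset.mem_range.mpr (Nat.succ_pos m)) h

/-- Substitution as an algebra homomorphism. -/
noncomputable def substHom (φ : PowerSeries k) (hφ : PowerSeries.constantCoeff φ = 0) :
    PowerSeries k →ₐ[k] PowerSeries k where
  toFun f := substPS φ f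
  map_one' := substPS_one φ
  map_mul' := substPS_mul hφ
  map_zero' := by
    ext m; rw [coeff_substPS]; simp
  map_add' := substPS_add φ
  commutes' r := by
    simpa [PowerSeries.algebraMap_apply] using substPS_C φ r

lemma coeff_pow_self {φ : PowerSeries k} (hφ : PowerSeries.constantCoeff φ = 0) :
    ∀ d : ℕ, PowerSeries.coeff d (φ ^ d) = (PowerSeries.coeff 1 φ) ^ d
  | 0 => by simp
  | (d + 1) => by
    rw [pow_succ, PowerSeries.coeff_mul, Finset.sum_eq_single (d, 1)]
    · rw [coeff_pow_self hφ d, pow_succ]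
    · rintro ⟨a, b⟩ hab hne
      have hab' : a + b = d + 1 := Finset.HasAntidiagonal.mem_antidiagonal.mp hab
      have hne' : ¬(a = d ∧ b = 1) := fun ⟨ha, hb⟩ => hne (by rw [ha, hb])
      rcases lt_or_ge a d with h | h
      · rw [coeff_pow_eq_zero hφ h, zero_mul]
      · have hb : b = 0 := by omega
        subst hb
        show PowerSeries.coeff a (φ ^ d) * PowerSeries.coeff 0 φ = 0
        rw [PowerSeries.coeff_zero_eq_constantCoeff, hφ, mul_zero]
    · intro h
      rw [Finset.HasAntidiagonal.mem_antidiagonal] at h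
      omega

lemma substPS_X {φ : PowerSeries k} (hφ : PowerSeries.constantCoeff φ = 0) :
    substPS φ PowerSeries.X = φ := by
  ext m
  rw [coeff_substPS, Finset.sum_eq_single 1]
  · rw [PowerSeries.coeff_X, if_pos rfl, pow_one, one_mul]
  · intro j _ hj
    rw [PowerSeries.coeff_X, if_neg hj, zero_mul]
  · intro h
    have hm : m = 0 := by
      rcases Nat.eq_zero_or_pos m with h0 | h0
      · exact h0
      · exact absurd (Finset.mem_range.mpr (by omega)) h
    subst hm
    simp [hφ]

/-- Coefficients of the compositional preimage. -/
noncomputable def revCoeff (u g : PowerSeries k) : ℕ → k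
  | 0 => 0
  | (m + 1) =>
    ((PowerSeries.coeff 1 u) ^ (m + 1))⁻¹ *
      (PowerSeries.coeff (m + 1) g -
        ∑ j ∈ (Finset.range (m + 1)).attach,
          revCoeff u g j.1 * PowerSeries.coeff (m + 1) (u ^ j.1))
  termination_by m => m
  decreasing_by exact Finset.mem_range.mp j.2

lemma substPS_revCoeff {u : PowerSeries k} (hu0 : PowerSeries.constantCoeff u = 0)
    (hc : PowerSeries.coeff 1 u ≠ 0) {g : PowerSeries k}
    (hg : PowerSeries.constantCoeff g = 0) :
    substPS u (PowerSeries.mk (revCoeff u g)) = g := by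
  ext m
  rw [coeff_substPS]
  simp only [PowerSeries.coeff_mk]
  cases m with
  | zero =>
    have hg0 : PowerSeries.coeff 0 g = 0 := by
      rw [PowerSeries.coeff_zero_eq_constantCoeff]; exact hg
    simp [revCoeff, hg0]
  | succ m =>
    rw [Finset.sum_range_succ, coeff_pow_self hu0 (m + 1)]
    have hrev : revCoeff u g (m + 1) =
        ((PowerSeries.coeff 1 u) ^ (m + 1))⁻¹ *
          (PowerSeries.coeff (m + 1) g -
            ∑ j ∈ Finset.range (m + 1),
              revCoeff u g j * PowerSeries.coeff (m + 1) (u ^ j)) := by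
      rw [revCoeff, Finset.sum_attach (Finset.range (m+1))
        (fun j => revCoeff u g j * PowerSeries.coeff (m + 1) (u ^ j))]
    rw [hrev]
    have hcn : (PowerSeries.coeff 1 u) ^ (m + 1) ≠ 0 := pow_ne_zero _ hc
    field_simp
    ring

lemma substPS_zero_of (φ : PowerSeries k) : substPS φ 0 = 0 := by
  ext m; rw [coeff_substPS]; simp

lemma order_substPS {u : PowerSeries k} (hu0 : PowerSeries.constantCoeff u = 0)
    (hc : PowerSeries.coeff 1 u ≠ 0) (f : PowerSeries k) :
    (substPS u f).order = f.order := by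
  rcases eq_or_ne f 0 with rfl | hf
  · rw [substPS_zero_of]
  · have hford : f.order < ⊤ := PowerSeries.order_finite_iff_ne_zero.mpr hf
    obtain ⟨d, hd⟩ : ∃ d : ℕ, f.order = d := by
      cases hdo : f.order with
      | top => rw [hdo] at hford; exact absurd hford (lt_irrefl _)
      | coe d => exact ⟨d, rfl⟩
    have hfd : PowerSeries.coeff d f ≠ 0 := (PowerSeries.order_eq_nat.mp hd).1
    have hflt : ∀ i, i < d → PowerSeries.coeff i f = 0 := (PowerSeries.order_eq_nat.mp hd).2
    rw [hd]
    rw [PowerSeries.order_eq_nat]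
    constructor
    · rw [coeff_substPS, Finset.sum_eq_single d]
      · rw [coeff_pow_self hu0]
        exact mul_ne_zero hfd (pow_ne_zero _ hc)
      · intro j hj hne
        rcases lt_or_ge j d with h | h
        · rw [hflt j h, zero_mul]
        · have : d < j := lt_of_le_of_ne h (Ne.symm hne)
          rw [coeff_pow_eq_zero hu0 this, mul_zero]
      · intro h
        exact absurd (Finset.mem_range.mpr (by omega)) h
    · intro i hi
      rw [coeff_substPS]
      refine Finset.sum_eq_zero fun j hj => ?_
      have hji : j ≤ i := Nat.lt_succ_iff.mp (Finset.mem_range.mp hj)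
      rw [hflt j (by omega), zero_mul]

section MV

variable {n : ℕ}

lemma coeff_prod_pow_eq_zero {P : Fin n → PowerSeries k}
    (hP : ∀ i, PowerSeries.constantCoeff (P i) = 0) {d : Fin n →₀ ℕ} {m : ℕ}
    (i₀ : Fin n) (h : m < d i₀) :
    PowerSeries.coeff m (d.prod fun i e => P i ^ e) = 0 := by
  have hi₀ : i₀ ∈ d.support := Finsupp.mem_support_iff.mpr (by omega)
  have hdvd : (X : PowerSeries k) ^ (d i₀) ∣ d.prod fun i e => P i ^ e := by
    refine dvd_trans (pow_dvd_pow_of_dvd (PowerSeries.X_dvd_iff.mpr (hP i₀)) _) ?_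
    exact Finset.dvd_prod_of_mem _ hi₀
  exact coeff_eq_zero_of_X_pow_dvd hdvd h

lemma coeff_aeval_eq_zero {P : Fin n → PowerSeries k}
    (hP : ∀ i, PowerSeries.constantCoeff (P i) = 0) {Q : MvPolynomial (Fin n) k} {m : ℕ}
    (h : ∀ d : Fin n →₀ ℕ, (∀ i, d i ≤ m) → MvPolynomial.coeff d Q = 0) :
    PowerSeries.coeff m (MvPolynomial.aeval P Q) = 0 := by
  conv_lhs => rw [Q.as_sum]
  rw [map_sum, map_sum]
  refine Finset.sum_eq_zero fun d _ => ?_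
  by_cases hd : ∀ i, d i ≤ m
  · rw [h d hd]
    simp
  · push_neg at hd
    obtain ⟨i₀, hi₀⟩ := hd
    rw [MvPolynomial.aeval_monomial, ← Algebra.smul_def, map_smul,
      coeff_prod_pow_eq_zero hP i₀ hi₀, smul_zero]

lemma coeff_aeval_congr {P : Fin n → PowerSeries k}
    (hP : ∀ i, PowerSeries.constantCoeff (P i) = 0) {Q₁ Q₂ : MvPolynomial (Fin n) k} {m : ℕ}
    (h : ∀ d : Fin n →₀ ℕ, (∀ i, d i ≤ m) → MvPolynomial.coeff d Q₁ = MvPolynomial.coeff d Q₂) :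
    PowerSeries.coeff m (MvPolynomial.aeval P Q₁) =
      PowerSeries.coeff m (MvPolynomial.aeval P Q₂) := by
  have : PowerSeries.coeff m (MvPolynomial.aeval P (Q₁ - Q₂)) = 0 := by
    refine coeff_aeval_eq_zero hP fun d hd => ?_
    rw [MvPolynomial.coeff_sub, h d hd, sub_self]
  rw [map_sub, map_sub] at this
  exact sub_eq_zero.mp this

lemma coeff_mvSubst [NeZero n] {P : Fin n → PowerSeries k}
    (hP : ∀ i, PowerSeries.constantCoeff (P i) = 0) (ψ : MvPowerSeries (Fin n) k)
    {m N : ℕ} (h : m < N) :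
    PowerSeries.coeff m (mvSubst P ψ) =
      PowerSeries.coeff m (MvPolynomial.aeval P
        (MvPowerSeries.trunc k (Finsupp.equivFunOnFinite.symm fun _ => N) ψ)) := by
  rw [mvSubst, PowerSeries.coeff_mk]
  refine coeff_aeval_congr hP fun d hd => ?_
  rw [MvPowerSeries.coeff_trunc, MvPowerSeries.coeff_trunc]
  have hlt : ∀ N', m < N' → d < Finsupp.equivFunOnFinite.symm fun _ : Fin n => N' := by
    intro N' hN'
    rw [lt_iff_le_and_ne]
    constructor
    · rw [Finsupp.le_def]
      intro i
      simp only [Finsupp.coe_equivFunOnFinite_symm]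
      have := hd i
      omega
    · intro heq
      have := DFunLike.congr_fun heq (0 : Fin n)
      simp only [Finsupp.coe_equivFunOnFinite_symm] at this
      have h0 := hd (0 : Fin n)
      omega
  rw [if_pos (hlt (m+1) (by omega)), if_pos (hlt N h)]

set_option maxHeartbeats 1000000 in
lemma mvSubst_comp [NeZero n] {u : PowerSeries k} (hu0 : PowerSeries.constantCoeff u = 0)
    {P : Fin n → PowerSeries k} (hP : ∀ i, PowerSeries.constantCoeff (P i) = 0)
    (ψ : MvPowerSeries (Fin n) k) :
    mvSubst (fun i => substPS u (P i)) ψ = substPS u (mvSubst P ψ) := by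
  ext m
  rw [mvSubst, PowerSeries.coeff_mk]
  set T := MvPowerSeries.trunc k (Finsupp.equivFunOnFinite.symm fun _ : Fin n => m + 1) ψ with hT
  have hcomp : MvPolynomial.aeval (fun i => substPS u (P i)) T =
      substPS u (MvPolynomial.aeval P T) := by
    have h2 := MvPolynomial.comp_aeval_apply (f := P) (substHom u hu0) T
    exact h2.symm
  rw [hcomp]
  refine coeff_substPS_congr fun j hj => ?_
  exact (coeff_mvSubst hP ψ (by omega : j < m + 1)).symm

end MV

end ArcAux

/-- Let `α* : k[[x_1,…,x_n]] → k[[t]]` be a (continuous) local `k`-algebra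
homomorphism with `ord_t(α*(x_1)) = 1`, and `v = ord_t ∘ α*`.  Then there exist
`P_i ∈ t·k[[t]]` with `α*(x_i) = P_i(α*(x_1))` for `2 ≤ i ≤ n`, and for every `ψ`,
`v(ψ) = ord_t ψ(t, P_2(t), …, P_n(t))`. -/
theorem nonsingular_arc_normal_form
    (k : Type) [Field k] {n : ℕ} [NeZero n]
    (α : MvPowerSeries (Fin n) k →ₐ[k] PowerSeries k)
    (hloc : ∀ i, PowerSeries.constantCoeff (α (MvPowerSeries.X i)) = 0)
    (hcont : ∀ ψ, α ψ = mvSubst (fun i => α (MvPowerSeries.X i)) ψ)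
    (h1 : (α (MvPowerSeries.X 0)).order = 1) :
    ∃ P : Fin n → PowerSeries k, P 0 = PowerSeries.X ∧
      (∀ i, PowerSeries.constantCoeff (P i) = 0) ∧
      (∀ i : Fin n, i ≠ 0 → α (MvPowerSeries.X i) = substPS (α (MvPowerSeries.X 0)) (P i)) ∧
      ∀ ψ, (α ψ).order = (mvSubst P ψ).order := by
  classical
  set u := α (MvPowerSeries.X 0) with hu
  have hu0 : PowerSeries.constantCoeff u = 0 := hloc 0
  have hc : PowerSeries.coeff 1 u ≠ 0 := by
    have := PowerSeries.order_eq_nat.mp (show u.order = (1 : ℕ) by exact_mod_cast h1)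
    exact this.1
  refine ⟨fun i => if i = 0 then PowerSeries.X else
    PowerSeries.mk (ArcAux.revCoeff u (α (MvPowerSeries.X i))), by simp, ?_, ?_, ?_⟩
  · intro i
    by_cases hi : i = 0
    · simp [hi]
    · simp only [if_neg hi, PowerSeries.constantCoeff_mk]
      rw [ArcAux.revCoeff]
  · intro i hi
    simp only [if_neg hi]
    exact (ArcAux.substPS_revCoeff hu0 hc (hloc i)).symm
  · intro ψ
    set P : Fin n → PowerSeries k := fun i => if i = 0 then PowerSeries.X else
      PowerSeries.mk (ArcAux.revCoeff u (α (MvPowerSeries.X i))) with hPdef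
    have hP : ∀ i, PowerSeries.constantCoeff (P i) = 0 := by
      intro i
      by_cases hi : i = 0
      · simp [hPdef, hi]
      · simp only [hPdef, if_neg hi, PowerSeries.constantCoeff_mk]
        rw [ArcAux.revCoeff]
    have hPall : ∀ i, α (MvPowerSeries.X i) = substPS u (P i) := by
      intro i
      by_cases hi : i = 0
      · subst hi
        simp only [hPdef, if_pos rfl]
        exact (ArcAux.substPS_X hu0).symm
      · simp only [hPdef, if_neg hi]
        exact (ArcAux.substPS_revCoeff hu0 hc (hloc i)).symm
    rw [hcont ψ]
    have : (fun i => α (MvPowerSeries.X i)) = fun i => substPS u (P i) := funext hPall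
    rw [this, ArcAux.mvSubst_comp hu0 hP ψ, ArcAux.order_substPS hu0 hc]
end
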